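/- arXiv:2109.11676 — 3 statements merged into one kernel-verified Lean document; each statement's English description precedes it below -/
import Mathlib

section
/- Let H̃₁, …, H̃_M be Hermitian d×d matrices, |ψ⟩ ∈ ℂ^d a unit vector, and extend |ψ⟩ to an orthonormal basis {|m⟩} of ℂ^d with |ψ⟩ among the basis vectors. Define vectors R_m, I_m ∈ ℝ^M by R_m(j) = Re⟨m|H̃_j|ψ⟩ and I_m(j) = Im⟨m|H̃_j|ψ⟩. Then the matrix F with F_jk = 4 Re[⟨ψ|H̃_j H̃_k|ψ⟩ - ⟨ψ|H̃_j|ψ⟩⟨ψ|H̃_k|ψ⟩] equals 4 Σ_{m : |m⟩ ≠ |ψ⟩} (R_m R_mᵀ + I_m I_mᵀ). In particular, rank(F) ≤ 2d - 2. -/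
open Matrix

private lemma my_rank_smul_le {M : ℕ} (c : ℝ) (A : Matrix (Fin M) (Fin M) ℝ) :
    (c • A).rank ≤ A.rank := by
  rw [Matrix.rank, Matrix.rank]
  apply Submodule.finrank_mono
  rintro _ ⟨y, rfl⟩
  exact ⟨c • y, by simp [Matrix.mulVecLin_apply, Matrix.mulVec_smul,
    Matrix.smul_mulVec]⟩

private lemma my_rank_add_le {M : ℕ} (A B : Matrix (Fin M) (Fin M) ℝ) :
    (A + B).rank ≤ A.rank + B.rank := by
  rw [Matrix.rank, Matrix.rank, Matrix.rank]
  have h : LinearMap.range (A + B).mulVecLin ≤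
      LinearMap.range A.mulVecLin ⊔ LinearMap.range B.mulVecLin := by
    rintro _ ⟨y, rfl⟩
    rw [Matrix.mulVecLin_add]
    exact Submodule.add_mem_sup ⟨y, rfl⟩ ⟨y, rfl⟩
  exact (Submodule.finrank_mono h).trans
    (Submodule.finrank_add_le_finrank_add_finrank _ _)

private lemma my_rank_sum_le {d M : ℕ} (s : Finset (Fin d))
    (f : Fin d → Matrix (Fin M) (Fin M) ℝ) :
    (∑ m ∈ s, f m).rank ≤ ∑ m ∈ s, (f m).rank := by
  classical
  induction s using Finset.induction with
  | empty => simp [Matrix.rank_zero]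
  | insert _ _ h ih =>
    rw [Finset.sum_insert h, Finset.sum_insert h]
    exact (my_rank_add_le _ _).trans (add_le_add_right ih _)

private lemma my_rank_vecMulVec_le {M : ℕ} (w v : Fin M → ℝ) :
    (Matrix.vecMulVec w v).rank ≤ 1 := by
  rw [Matrix.vecMulVec_eq (Fin 1)]
  exact (Matrix.rank_mul_le_left _ _).trans
    (by have h := Matrix.rank_le_card_width (Matrix.replicateCol (Fin 1) w); simp at h; exact h)

/-- Rank-one decomposition of the QFIM: with an orthonormal basis `{|m⟩}` containing `|ψ⟩`,
`F = 4 ∑_{m ≠ ψ} (R_m R_mᵀ + I_m I_mᵀ)`, and hence `rank F ≤ 2d - 2`. -/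
theorem stmt_9 {d M : ℕ} (Ht : Fin M → Matrix (Fin d) (Fin d) ℂ)
    (hH : ∀ j, (Ht j).IsHermitian)
    (ψ : Fin d → ℂ) (hψ : dotProduct (star ψ) ψ = 1)
    (b : Fin d → Fin d → ℂ)
    (hON : ∀ m n, dotProduct (star (b m)) (b n) = if m = n then 1 else 0)
    (m0 : Fin d) (hb0 : b m0 = ψ)
    (R I' : Fin d → Fin M → ℝ)
    (hR : ∀ m j, R m j = (dotProduct (star (b m)) ((Ht j).mulVec ψ)).re)
    (hI : ∀ m j, I' m j = (dotProduct (star (b m)) ((Ht j).mulVec ψ)).im)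
    (F : Matrix (Fin M) (Fin M) ℝ)
    (hF : ∀ j k, F j k =
      4 * (dotProduct (star ψ) ((Ht j * Ht k).mulVec ψ)
            - dotProduct (star ψ) ((Ht j).mulVec ψ)
              * dotProduct (star ψ) ((Ht k).mulVec ψ)).re) :
    F = (4 : ℝ) • ∑ m ∈ Finset.univ.erase m0,
          (Matrix.vecMulVec (R m) (R m) + Matrix.vecMulVec (I' m) (I' m))
    ∧ F.rank ≤ 2 * d - 2 := by
  classical
  -- the vectors u j = H_j |ψ⟩ and their coordinates in the basis
  set u : Fin M → Fin d → ℂ := fun j => (Ht j).mulVec ψ with hu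
  set c : Fin d → Fin M → ℂ := fun m j => dotProduct (star (b m)) (u j) with hc
  -- basis matrix
  set B : Matrix (Fin d) (Fin d) ℂ := Matrix.of b with hB
  have hBB : B * Bᴴ = 1 := by
    ext m n
    have h := hON n m
    simp only [dotProduct, Pi.star_apply] at h
    simp only [Matrix.mul_apply, Matrix.conjTranspose_apply, Matrix.one_apply, hB,
      Matrix.of_apply]
    rw [show (∑ i, b m i * star (b n i)) = ∑ i, star (b n i) * b m i from
      Finset.sum_congr rfl fun i _ => mul_comm _ _, h]
    by_cases hmn : m = n <;> simp [hmn, eq_comm]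
  have hB2 : Bᴴ * B = 1 := mul_eq_one_comm.mp hBB
  -- the matrix C with rows the conjugated basis vectors; c m = (C *ᵥ v) m
  set C : Matrix (Fin d) (Fin d) ℂ := Bᴴᵀ with hC
  have hCC : Cᴴ * C = 1 := by
    have : Cᴴ * C = (Bᴴ * B)ᵀ := by
      rw [Matrix.transpose_mul, hC]
      congr 1
      · ext i j; simp [Matrix.conjTranspose_apply, Matrix.transpose_apply]
    rw [this, hB2, Matrix.transpose_one]
  -- completeness: ∑_m conj(⟨b m, v⟩) ⟨b m, w⟩ = ⟨v, w⟩
  have hkey : ∀ v w : Fin d → ℂ,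
      (∑ m, star (dotProduct (star (b m)) v) * dotProduct (star (b m)) w)
        = dotProduct (star v) w := by
    intro v w
    have hmv : ∀ v : Fin d → ℂ, (fun m => dotProduct (star (b m)) v) = C.mulVec v := by
      intro v
      funext m
      simp [Matrix.mulVec, dotProduct, hC, hB, Matrix.conjTranspose_apply,
        Matrix.transpose_apply]
    calc (∑ m, star (dotProduct (star (b m)) v) * dotProduct (star (b m)) w)
        = dotProduct (star (C.mulVec v)) (C.mulVec w) := by
          simp [dotProduct, ← hmv]
      _ = dotProduct (star v) w := by
          rw [Matrix.star_mulVec, dotProduct_mulVec, Matrix.vecMul_vecMul,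
            hCC, Matrix.vecMul_one]
  -- hermiticity: ⟨ψ| H_j = (H_j ψ)†
  have hherm : ∀ j, Matrix.vecMul (star ψ) (Ht j) = star (u j) := by
    intro j
    ext i
    simp only [Matrix.vecMul, Matrix.mulVec, dotProduct, Pi.star_apply, star_sum,
      star_mul', hu]
    refine Finset.sum_congr rfl fun l _ => ?_
    rw [← (hH j).apply i l, star_star, mul_comm]
  -- the main entrywise identity
  have hmain : ∀ j k, F j k =
      4 * ∑ m ∈ Finset.univ.erase m0, (R m j * R m k + I' m j * I' m k) := by
    intro j k
    have h1 : dotProduct (star ψ) ((Ht j * Ht k).mulVec ψ)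
        = dotProduct (star (u j)) (u k) := by
      rw [← Matrix.mulVec_mulVec, dotProduct_mulVec, hherm j]
    have h2 : dotProduct (star (u j)) (u k) = ∑ m, star (c m j) * c m k := by
      rw [← hkey (u j) (u k)]
    have hc0 : ∀ j, c m0 j = dotProduct (star ψ) ((Ht j).mulVec ψ) := by
      intro j; simp [hc, hb0, hu]
    have hsplit : (∑ m, star (c m j) * c m k)
        = star (c m0 j) * c m0 k + ∑ m ∈ Finset.univ.erase m0, star (c m j) * c m k := by
      rw [← Finset.add_sum_erase _ _ (Finset.mem_univ m0)]
    have hsj : star (c m0 j) * c m0 k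
        = dotProduct (star ψ) ((Ht j).mulVec ψ) * dotProduct (star ψ) ((Ht k).mulVec ψ) := by
      rw [hc0 j, hc0 k]
      have := hherm j
      have hreal : star (dotProduct (star ψ) ((Ht j).mulVec ψ))
          = dotProduct (star ψ) ((Ht j).mulVec ψ) := by
        calc star (dotProduct (star ψ) ((Ht j).mulVec ψ))
            = dotProduct (star ((Ht j).mulVec ψ)) ψ := by
              simp [dotProduct, star_sum, star_mul', mul_comm]
          _ = dotProduct (star ψ) ((Ht j).mulVec ψ) := by
              rw [← hherm j, ← dotProduct_mulVec]
      rw [hreal]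
    rw [hF j k, h1, h2, hsplit, hsj]
    have : (∑ m ∈ Finset.univ.erase m0, star (c m j) * c m k).re
        = ∑ m ∈ Finset.univ.erase m0, (R m j * R m k + I' m j * I' m k) := by
      rw [Complex.re_sum]
      refine Finset.sum_congr rfl fun m _ => ?_
      rw [hR m j, hR m k, hI m j, hI m k]
      simp only [hc, hu]
      simp [Complex.mul_re]
    rw [add_sub_cancel_left, this]
  -- conclude the matrix identity
  have heq : F = (4 : ℝ) • ∑ m ∈ Finset.univ.erase m0,
      (Matrix.vecMulVec (R m) (R m) + Matrix.vecMulVec (I' m) (I' m)) := by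
    ext j k
    rw [hmain j k]
    simp [Matrix.sum_apply, Matrix.vecMulVec_apply, Finset.mul_sum]
  refine ⟨heq, ?_⟩
  -- rank bound
  rw [heq]
  have h1 : ((4 : ℝ) • ∑ m ∈ Finset.univ.erase m0,
      (Matrix.vecMulVec (R m) (R m) + Matrix.vecMulVec (I' m) (I' m))).rank
      ≤ (∑ m ∈ Finset.univ.erase m0,
        (Matrix.vecMulVec (R m) (R m) + Matrix.vecMulVec (I' m) (I' m))).rank :=
    my_rank_smul_le _ _
  have h2 : (∑ m ∈ Finset.univ.erase m0,
      (Matrix.vecMulVec (R m) (R m) + Matrix.vecMulVec (I' m) (I' m))).rank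
      ≤ ∑ m ∈ Finset.univ.erase m0, 2 := by
    refine (my_rank_sum_le _ _).trans (Finset.sum_le_sum fun m _ => ?_)
    calc (Matrix.vecMulVec (R m) (R m) + Matrix.vecMulVec (I' m) (I' m)).rank
        ≤ (Matrix.vecMulVec (R m) (R m)).rank + (Matrix.vecMulVec (I' m) (I' m)).rank :=
          my_rank_add_le _ _
      _ ≤ 2 := by
          have := my_rank_vecMulVec_le (R m) (R m)
          have := my_rank_vecMulVec_le (I' m) (I' m)
          omega
  have hcard : (Finset.univ.erase m0).card = d - 1 := by
    rw [Finset.card_erase_of_mem (Finset.mem_univ m0)]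
    simp
  have hd : 0 < d := m0.pos
  refine (h1.trans h2).trans ?_
  rw [Finset.sum_const, hcard, smul_eq_mul]
  omega
end

section
/- Let H̃₁, …, H̃_M be Hermitian d×d matrices such that each iH̃_j lies in a real subspace 𝔤 of anti-Hermitian matrices of real dimension D. Then for any unit vector |ψ⟩ ∈ ℂ^d, the quantum Fisher information matrix F with entries F_jk = 4 Re[⟨ψ|H̃_j H̃_k|ψ⟩ - ⟨ψ|H̃_j|ψ⟩⟨ψ|H̃_k|ψ⟩] has rank at most D. -/
open Matrix

lemma real_smul_matrix {d : ℕ} (c : ℝ) (M : Matrix (Fin d) (Fin d) ℂ) :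
    c • M = (c : ℂ) • M := by
  ext i j; simp [Complex.real_smul]

lemma dot_smul_helper {d : ℕ} (ψ : Fin d → ℂ) (c : ℝ) (M : Matrix (Fin d) (Fin d) ℂ) :
    dotProduct (star ψ) ((c • M).mulVec ψ) = (c : ℂ) * dotProduct (star ψ) (M.mulVec ψ) := by
  rw [real_smul_matrix, Matrix.smul_mulVec, dotProduct_smul, smul_eq_mul]

/-- The QFIM entry, as a real-linear functional in `A = i H̃_k`. -/
noncomputable def qfimL {d : ℕ} (H : Matrix (Fin d) (Fin d) ℂ) (ψ : Fin d → ℂ) :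
    Matrix (Fin d) (Fin d) ℂ →ₗ[ℝ] ℝ where
  toFun A := 4 * (dotProduct (star ψ) ((H * ((-Complex.I) • A)).mulVec ψ)
      - dotProduct (star ψ) (H.mulVec ψ)
        * dotProduct (star ψ) (((-Complex.I) • A).mulVec ψ)).re
  map_add' A B := by
    simp [smul_add, Matrix.mul_add, Matrix.add_mulVec, dotProduct_add, mul_add]
    ring
  map_smul' c A := by
    have h1 : (-Complex.I) • (c • A) = c • ((-Complex.I) • A) := smul_comm _ _ _
    have h2 : H * (c • ((-Complex.I) • A)) = c • (H * ((-Complex.I) • A)) := by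
      rw [real_smul_matrix, real_smul_matrix c (H * _), Matrix.mul_smul]
    simp only [h1, h2, dot_smul_helper, smul_eq_mul, RingHom.id_apply]
    simp [Complex.sub_re, Complex.mul_re, Complex.ofReal_re, Complex.ofReal_im]
    ring

/-- Theorem 1: if each `i H̃_j` lies in a real subspace `𝔤` of anti-Hermitian matrices of
real dimension `D`, then the QFIM has rank at most `D`. -/
theorem stmt_10 {d M D : ℕ} (Ht : Fin M → Matrix (Fin d) (Fin d) ℂ)
    (hHerm : ∀ j, (Ht j).IsHermitian)
    (g : Submodule ℝ (Matrix (Fin d) (Fin d) ℂ))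
    (hanti : ∀ A ∈ g, Aᴴ = -A)
    (hdim : Module.finrank ℝ g = D)
    (hHg : ∀ j, Complex.I • Ht j ∈ g)
    (ψ : Fin d → ℂ) (hψ : dotProduct (star ψ) ψ = 1)
    (F : Matrix (Fin M) (Fin M) ℝ)
    (hF : ∀ j k, F j k =
      4 * (dotProduct (star ψ) ((Ht j * Ht k).mulVec ψ)
            - dotProduct (star ψ) ((Ht j).mulVec ψ)
              * dotProduct (star ψ) ((Ht k).mulVec ψ)).re) :
    F.rank ≤ D := by
  classical
  have key : ∀ j k, F j k = qfimL (Ht j) ψ (Complex.I • Ht k) := by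
    intro j k
    have : (-Complex.I) • (Complex.I • Ht k) = Ht k := by
      rw [smul_smul]; simp
    rw [hF]; simp only [qfimL, LinearMap.coe_mk, AddHom.coe_mk, this]
  let b : Module.Basis (Fin D) ℝ g := Module.finBasisOfFinrankEq ℝ g hdim
  let W : Matrix (Fin D) (Fin M) ℝ := fun a k => b.repr ⟨Complex.I • Ht k, hHg k⟩ a
  let E : Matrix (Fin M) (Fin D) ℝ := fun j a => qfimL (Ht j) ψ (b a : Matrix (Fin d) (Fin d) ℂ)
  have hFE : F = E * W := by
    ext j k
    have hx : (⟨Complex.I • Ht k, hHg k⟩ : g) = ∑ a, W a k • b a := (b.sum_repr _).symm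
    have hxc : (Complex.I • Ht k : Matrix (Fin d) (Fin d) ℂ)
        = ∑ a, W a k • (b a : Matrix (Fin d) (Fin d) ℂ) := by
      have := congrArg (Submodule.subtype g) hx
      simpa using this
    rw [key j k, Matrix.mul_apply, hxc, map_sum]
    simp [E, W, mul_comm]
  rw [hFE]
  calc (E * W).rank ≤ W.rank := Matrix.rank_mul_le_right E W
    _ ≤ Fintype.card (Fin D) := Matrix.rank_le_card_height W
    _ = D := Fintype.card_fin D
end

section
/- Let H̃₁, …, H̃_M be Hermitian d×d matrices and define the M×M real symmetric matrix H with entries H_ij = -(2/d)[ d · Re Tr[H̃_i H̃_j] + Re(Tr[H̃_i] Tr[H̃_j]) ]. If each iH̃_j lies in a real subspace 𝔤 of anti-Hermitian matrices of real dimension D, then rank(H) ≤ D. -/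
open Matrix

noncomputable def bform (d : ℕ) :
    Matrix (Fin d) (Fin d) ℂ →ₗ[ℝ] Matrix (Fin d) (Fin d) ℂ →ₗ[ℝ] ℝ :=
  LinearMap.mk₂ ℝ
    (fun A B => (2 / (d : ℝ)) *
      ((d : ℝ) * (Matrix.trace (A * B)).re + ((Matrix.trace A) * (Matrix.trace B)).re))
    (by
      intro A A' B
      simp [Matrix.add_mul, Matrix.trace_add, add_mul, Complex.add_re]
      ring)
    (by
      intro r A B
      simp [Matrix.smul_mul, Matrix.trace_smul, Complex.real_smul, Complex.mul_re]
      ring)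
    (by
      intro A B B'
      simp [Matrix.mul_add, Matrix.trace_add, mul_add, Complex.add_re]
      ring)
    (by
      intro r A B
      simp [Matrix.mul_smul, Matrix.trace_smul, Complex.real_smul, Complex.mul_re]
      ring)

/-- The Hessian of the phase-insensitive compilation loss `L₂` at a global optimum,
`H_ij = -(2/d)[d Re Tr[H̃_i H̃_j] + Re(Tr H̃_i Tr H̃_j)]`, has rank at most `D` when each
`i H̃_j` lies in a real subspace `𝔤` of anti-Hermitian matrices of dimension `D`. -/
theorem stmt_18 {d M D : ℕ} (Ht : Fin M → Matrix (Fin d) (Fin d) ℂ)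
    (hHerm : ∀ j, (Ht j).IsHermitian)
    (H : Matrix (Fin M) (Fin M) ℝ)
    (hHdef : ∀ i j, H i j = -(2 / (d : ℝ)) *
      ((d : ℝ) * (Matrix.trace (Ht i * Ht j)).re
        + (Matrix.trace (Ht i) * Matrix.trace (Ht j)).re))
    (g : Submodule ℝ (Matrix (Fin d) (Fin d) ℂ))
    (hanti : ∀ A ∈ g, Aᴴ = -A)
    (hdim : Module.finrank ℝ g = D)
    (hHg : ∀ j, Complex.I • Ht j ∈ g) :
    H.rank ≤ D := by
  classical
  set β := bform d with hβdef
  let b : Module.Basis (Fin D) ℝ g := Module.finBasisOfFinrankEq ℝ g hdim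
  let w : Fin M → g := fun j => ⟨Complex.I • Ht j, hHg j⟩
  let C : Matrix (Fin M) (Fin D) ℝ := fun i k => b.repr (w i) k
  let G : Matrix (Fin D) (Fin D) ℝ := fun k l => β (b k : Matrix (Fin d) (Fin d) ℂ) (b l)
  have hw : ∀ i : Fin M, (w i : Matrix (Fin d) (Fin d) ℂ) =
      ∑ k : Fin D, C i k • (b k : Matrix (Fin d) (Fin d) ℂ) := by
    intro i
    have := b.sum_repr (w i)
    calc (w i : Matrix (Fin d) (Fin d) ℂ)
        = ((∑ k : Fin D, b.repr (w i) k • b k : g) : Matrix (Fin d) (Fin d) ℂ) := by rw [this]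
      _ = ∑ k : Fin D, C i k • (b k : Matrix (Fin d) (Fin d) ℂ) := by
          push_cast [Submodule.coe_sum]
          rfl
  have key : H = C * G * Cᵀ := by
    ext i j
    have h1 : H i j = β ((w i : Matrix (Fin d) (Fin d) ℂ)) (w j) := by
      show H i j = (2 / (d : ℝ)) *
        ((d : ℝ) * (Matrix.trace ((Complex.I • Ht i) * (Complex.I • Ht j))).re +
          ((Matrix.trace (Complex.I • Ht i)) * (Matrix.trace (Complex.I • Ht j))).re)
      rw [hHdef]
      have hm : (Complex.I • Ht i) * (Complex.I • Ht j) = -(Ht i * Ht j) := by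
        rw [smul_mul_smul_comm, Complex.I_mul_I, neg_one_smul]
      rw [hm]
      simp only [Matrix.trace_neg, Matrix.trace_smul, smul_eq_mul, Complex.neg_re,
        Complex.mul_re, Complex.mul_im, Complex.I_re, Complex.I_im]
      ring
    have hL : β ((w i : Matrix (Fin d) (Fin d) ℂ)) (w j) =
        ∑ k : Fin D, ∑ l : Fin D, C i k * (C j l * G k l) := by
      rw [hw i, hw j]
      simp only [map_sum, _root_.map_smul, LinearMap.sum_apply, LinearMap.smul_apply,
        smul_eq_mul, Finset.mul_sum]
      rw [Finset.sum_comm]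
      refine Finset.sum_congr rfl fun k _ => Finset.sum_congr rfl fun l _ => ?_
      ring
    have hR : (C * G * Cᵀ) i j = ∑ k : Fin D, ∑ l : Fin D, C i k * G k l * C j l := by
      simp only [Matrix.mul_apply, Matrix.transpose_apply]
      rw [← Finset.sum_comm]
      exact Finset.sum_congr rfl fun k _ => by rw [Finset.sum_mul]
    rw [h1, hL, hR]
    refine Finset.sum_congr rfl fun k _ => Finset.sum_congr rfl fun l _ => ?_
    ring
  rw [key]
  calc (C * G * Cᵀ).rank ≤ (C * G).rank := Matrix.rank_mul_le_left _ _
    _ ≤ C.rank := Matrix.rank_mul_le_left _ _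
    _ ≤ D := by simpa using Matrix.rank_le_card_width C
end
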